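/- Let P and Q be probability mass functions on a common finite nonempty set A, with Q strictly positive on A. Let Q_min = min_{a ∈ A} Q(a) and β₂ = min_{a ∈ A} P(a)/Q(a). Then the relative entropy (in nats) satisfies D(P‖Q) ≤ ln(1 + |P−Q|²/(2·Q_min)) − (β₂/2)·|P−Q|², where |P−Q| = Σ_{a ∈ A} |P(a) − Q(a)|. -/

import Mathlib

open Real Set

/-- Key scalar inequality: `log t ≤ (t-1)(t+5)/(2(2t+1))` for `t > 0`. -/
lemma key_log_bound {t : ℝ} (ht : 0 < t) :
    Real.log t ≤ (t - 1) * (t + 5) / (2 * (2 * t + 1)) := by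
  set F : ℝ → ℝ := fun x => (x - 1) * (x + 5) / (2 * (2 * x + 1)) - Real.log x with hF
  have hd : ∀ x : ℝ, 0 < x → HasDerivAt F (4 * (x - 1) ^ 3 / (x * (4 * x + 2) ^ 2)) x := by
    intro x hx
    have h1 : HasDerivAt (fun x : ℝ => (x - 1) * (x + 5)) (2 * x + 4) x := by
      have := ((hasDerivAt_id x).sub_const 1).mul ((hasDerivAt_id x).add_const 5)
      refine this.congr_deriv ?_; simp only [id]; ring
    have h2 : HasDerivAt (fun x : ℝ => 2 * (2 * x + 1)) 4 x := by
      have := (((hasDerivAt_id x).const_mul 2).add_const 1).const_mul 2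
      refine this.congr_deriv ?_; ring
    have hden : 2 * (2 * x + 1) ≠ 0 := by positivity
    have h3 := h1.div h2 hden
    have h4 := Real.hasDerivAt_log hx.ne'
    have h5 := h3.sub h4
    refine h5.congr_deriv ?_
    field_simp
    ring
  have hcont : ∀ D : Set ℝ, D ⊆ Ioi 0 → ContinuousOn F D := by
    intro D hD
    apply ContinuousOn.sub
    · apply ContinuousOn.div
      · fun_prop
      · fun_prop
      · intro x hx; have := hD hx; simp only [mem_Ioi] at this; positivity
    · exact Real.continuousOn_log.mono (fun x hx => ne_of_gt (hD hx))
  have hF1 : F 1 = 0 := by simp [hF]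
  rcases le_or_gt 1 t with h1t | ht1
  · have hmono : MonotoneOn F (Ici 1) := by
      apply monotoneOn_of_deriv_nonneg (convex_Ici 1) (hcont _ (fun x hx => mem_Ioi.2 (lt_of_lt_of_le one_pos (mem_Ici.1 hx))))
      · intro x hx
        rw [interior_Ici] at hx
        exact ((hd x (lt_trans one_pos hx)).differentiableAt).differentiableWithinAt
      · intro x hx
        rw [interior_Ici] at hx
        have hx0 : (0:ℝ) < x := lt_trans one_pos hx
        rw [(hd x hx0).deriv]
        have : (0:ℝ) ≤ (x - 1) ^ 3 := pow_nonneg (by linarith [(mem_Ioi.1 hx).le]) 3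
        positivity
    have := hmono (mem_Ici.2 le_rfl) (mem_Ici.2 h1t) h1t
    rw [hF1] at this
    simpa [hF] using this
  · have hanti : AntitoneOn F (Icc t 1) := by
      apply antitoneOn_of_deriv_nonpos (convex_Icc t 1) (hcont _ ?_)
      · intro x hx
        rw [interior_Icc] at hx
        exact ((hd x (lt_trans ht hx.1)).differentiableAt).differentiableWithinAt
      · intro x hx
        rw [interior_Icc] at hx
        have hx0 : (0:ℝ) < x := lt_trans ht hx.1
        rw [(hd x hx0).deriv]
        have h3 : (x - 1) ^ 3 ≤ 0 :=
          odd_two_mul_add_one 1 |>.pow_nonpos (by linarith [hx.2])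
        have h4 : (0:ℝ) < x * (4 * x + 2) ^ 2 := by positivity
        have : 4 * (x - 1) ^ 3 ≤ 0 := by linarith
        exact div_nonpos_of_nonpos_of_nonneg this h4.le
      · intro x hx
        exact lt_of_lt_of_le ht hx.1
    have := hanti (mem_Icc.2 ⟨le_refl t, ht1.le⟩) (mem_Icc.2 ⟨ht1.le, le_refl 1⟩) ht1.le
    rw [hF1] at this
    simpa [hF] using this


lemma pinsker_pointwise {p q : ℝ} (hp : 0 < p) (hq : 0 < q) :
    q - p + 3 / 2 * (q - p) ^ 2 / (q + 2 * p) ≤ q * Real.log (q / p) := by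
  have h := key_log_bound (div_pos hp hq)
  have hlog : Real.log (q / p) = -Real.log (p / q) := by
    rw [← Real.log_inv, inv_div]
  have hq2p : q + 2 * p ≠ 0 := by positivity
  have hden : 2 * (2 * (p / q) + 1) ≠ 0 := by positivity
  have key : q - p + 3 / 2 * (q - p) ^ 2 / (q + 2 * p)
      = q * (-((p / q - 1) * (p / q + 5) / (2 * (2 * (p / q) + 1)))) := by
    field_simp
    ring
  rw [key, hlog]
  exact mul_le_mul_of_nonneg_left (neg_le_neg h) hq.le

lemma pinsker_sum {A : Type*} [Fintype A] (P Q : A → ℝ) (hP : ∀ a, 0 < P a)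
    (hQ : ∀ a, 0 < Q a) (hPsum : ∑ a, P a = 1) (hQsum : ∑ a, Q a = 1) :
    (∑ a, |P a - Q a|) ^ 2 / 2 ≤ ∑ a, Q a * Real.log (Q a / P a) := by
  have hpos : ∀ a ∈ Finset.univ, (0:ℝ) < Q a + 2 * P a := fun a _ => by
    have := hP a; have := hQ a; linarith
  have hCS := Finset.sq_sum_div_le_sum_sq_div Finset.univ (fun a => |P a - Q a|) hpos
  have hsum3 : ∑ a, (Q a + 2 * P a) = 3 := by
    rw [Finset.sum_add_distrib, ← Finset.mul_sum, hQsum, hPsum]; norm_num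
  rw [hsum3] at hCS
  have hsq : ∀ a, |P a - Q a| ^ 2 / (Q a + 2 * P a) = (Q a - P a) ^ 2 / (Q a + 2 * P a) := by
    intro a; rw [sq_abs]; ring_nf
  simp only [hsq] at hCS
  have hpt : ∑ a, (Q a - P a + 3 / 2 * (Q a - P a) ^ 2 / (Q a + 2 * P a))
      ≤ ∑ a, Q a * Real.log (Q a / P a) :=
    Finset.sum_le_sum fun a _ => pinsker_pointwise (hP a) (hQ a)
  have hsplit : ∑ a, (Q a - P a + 3 / 2 * (Q a - P a) ^ 2 / (Q a + 2 * P a))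
      = 3 / 2 * ∑ a, (Q a - P a) ^ 2 / (Q a + 2 * P a) := by
    rw [Finset.sum_add_distrib, Finset.sum_sub_distrib, hPsum, hQsum, Finset.mul_sum]
    simp only [mul_div_assoc]
    ring
  rw [hsplit] at hpt
  nlinarith [hCS, hpt]

lemma jensen_step {A : Type*} [Fintype A] (w r : A → ℝ) (hw : ∀ a, 0 ≤ w a)
    (hr : ∀ a, 0 < w a → 0 < r a) {W T : ℝ} (hW : ∑ a, w a = W)
    (hT : ∑ a, w a * r a = T) (hWpos : 0 < W) (hTpos : 0 < T) :
    ∑ a, w a * Real.log (r a) ≤ W * Real.log (T / W) := by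
  have hm : 0 < T / W := div_pos hTpos hWpos
  have hpt : ∀ a ∈ Finset.univ, w a * Real.log (r a)
      ≤ w a * Real.log (T / W) + (w a * r a) * (W / T) - w a := by
    intro a _
    rcases (hw a).eq_or_lt with h0 | h0
    · rw [← h0]; simp
    · have hra := hr a h0
      have hlog : Real.log (r a) - Real.log (T / W) = Real.log (r a / (T / W)) :=
        (Real.log_div hra.ne' hm.ne').symm
      have hle : Real.log (r a / (T / W)) ≤ r a / (T / W) - 1 :=
        Real.log_le_sub_one_of_pos (div_pos hra hm)
      have hdiv : r a / (T / W) = r a * (W / T) := by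
        field_simp
      nlinarith [h0, hle, hlog.le, hlog.ge, hdiv]
  have hsum := Finset.sum_le_sum hpt
  have hRHS : ∑ a, (w a * Real.log (T / W) + (w a * r a) * (W / T) - w a)
      = W * Real.log (T / W) := by
    rw [Finset.sum_sub_distrib, Finset.sum_add_distrib, ← Finset.sum_mul, ← Finset.sum_mul,
      hW, hT]
    field_simp
    ring
  rw [hRHS] at hsum
  exact hsum

lemma wlog_le {W s : ℝ} (hW : 0 < W) (hW1 : W ≤ 1) (hs : 0 ≤ s) :
    W * Real.log ((W + s) / W) ≤ Real.log (1 + s) := by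
  have h1 : (W + s) / W ∈ Ioi (0:ℝ) := by
    simp only [mem_Ioi]; positivity
  have h2 : (1:ℝ) ∈ Ioi (0:ℝ) := by norm_num
  have hc := (strictConcaveOn_log_Ioi.concaveOn).2 h1 h2 hW.le
    (by linarith : (0:ℝ) ≤ 1 - W) (by ring)
  simp only [smul_eq_mul, Real.log_one, mul_zero, add_zero, mul_one] at hc
  have he : W * ((W + s) / W) + (1 - W) = 1 + s := by
    field_simp; ring
  rw [he] at hc
  exact hc

theorem reverse_pinsker_finite {A : Type*} [Fintype A] [Nonempty A]
    (P Q : A → ℝ) (hP : ∀ a, 0 ≤ P a) (hPsum : ∑ a, P a = 1)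
    (hQ : ∀ a, 0 < Q a) (hQsum : ∑ a, Q a = 1) :
    ∑ a, P a * Real.log (P a / Q a) ≤
      Real.log (1 + (∑ a, |P a - Q a|) ^ 2 / (2 * ⨅ a, Q a)) -
        ((⨅ a, P a / Q a) / 2) * (∑ a, |P a - Q a|) ^ 2 := by
  classical
  set β := ⨅ a, P a / Q a with hβdef
  set Qm := ⨅ a, Q a with hQmdef
  set V := ∑ a, |P a - Q a| with hVdef
  have hbddP : BddBelow (Set.range fun a => P a / Q a) :=
    Set.Finite.bddBelow (Set.finite_range _)
  have hbddQ : BddBelow (Set.range Q) := Set.Finite.bddBelow (Set.finite_range _)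
  have hβle : ∀ a, β ≤ P a / Q a := fun a => ciInf_le hbddP a
  have hβ0 : 0 ≤ β := le_ciInf fun a => div_nonneg (hP a) (hQ a).le
  have hQmle : ∀ a, Qm ≤ Q a := fun a => ciInf_le hbddQ a
  have hQm0 : 0 < Qm := by
    obtain ⟨a0, ha0⟩ := Finite.exists_min Q
    exact lt_of_lt_of_le (hQ a0) (le_ciInf ha0)
  have hwle : ∀ a, β * Q a ≤ P a := fun a => by
    have h := hβle a
    rw [le_div_iff₀ (hQ a)] at h
    linarith
  have hβ1 : β ≤ 1 := by
    by_contra hcon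
    push_neg at hcon
    have hlt : ∀ a ∈ Finset.univ, Q a < P a := fun a _ => by
      have h1 := hwle a; have h2 := hQ a; nlinarith
    have := Finset.sum_lt_sum_of_nonempty Finset.univ_nonempty hlt
    rw [hPsum, hQsum] at this; exact lt_irrefl 1 this
  have hV0 : 0 ≤ V := Finset.sum_nonneg fun a _ => abs_nonneg _
  -- |P a - Q a| ≤ V / 2 for each a
  have hhalf : ∀ a, 2 * |P a - Q a| ≤ V := by
    intro a
    have h2 : ∑ b, (P b - Q b) = 0 := by
      rw [Finset.sum_sub_distrib, hPsum, hQsum]; ring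
    rw [← Finset.add_sum_erase _ _ (Finset.mem_univ a)] at h2
    have h3 : |P a - Q a| ≤ ∑ b ∈ Finset.univ.erase a, |P b - Q b| := by
      have : |P a - Q a| = |∑ b ∈ Finset.univ.erase a, (P b - Q b)| := by
        rw [show ∑ b ∈ Finset.univ.erase a, (P b - Q b) = -(P a - Q a) by linarith, abs_neg]
      rw [this]
      exact Finset.abs_sum_le_sum_abs _ _
    have h4 : V = |P a - Q a| + ∑ b ∈ Finset.univ.erase a, |P b - Q b| :=
      (Finset.add_sum_erase _ _ (Finset.mem_univ a)).symm
    linarith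
  set s := ∑ a, (P a - Q a) ^ 2 / Q a with hsdef
  have hs0 : 0 ≤ s := Finset.sum_nonneg fun a _ => div_nonneg (sq_nonneg _) (hQ a).le
  -- Step B : s ≤ V^2 / (2 Qm)
  have hsB : s ≤ V ^ 2 / (2 * Qm) := by
    have key : ∀ a ∈ Finset.univ, (P a - Q a) ^ 2 / Q a ≤ |P a - Q a| * (V / 2) / Qm := by
      intro a _
      apply div_le_div₀ (by positivity) ?_ hQm0 (hQmle a)
      calc (P a - Q a) ^ 2 = |P a - Q a| * |P a - Q a| := by
            rw [← sq_abs (P a - Q a), sq]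
        _ ≤ |P a - Q a| * (V / 2) :=
            mul_le_mul_of_nonneg_left (by linarith [hhalf a]) (abs_nonneg _)
    calc s ≤ ∑ a, |P a - Q a| * (V / 2) / Qm := Finset.sum_le_sum key
      _ = V ^ 2 / (2 * Qm) := by
        rw [← Finset.sum_div, ← Finset.sum_mul, ← hVdef]
        field_simp
  -- key sum identity
  have hsumsq : ∑ a, (P a - β * Q a) * (P a / Q a) = (1 - β) + s := by
    have e1 : ∀ a, (P a - β * Q a) * (P a / Q a)
        = (P a - Q a) ^ 2 / Q a + (2 * P a - Q a) - β * P a := by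
      intro a
      field_simp [(hQ a).ne']
      ring
    simp_rw [e1]
    rw [Finset.sum_sub_distrib, Finset.sum_add_distrib, Finset.sum_sub_distrib,
      ← Finset.mul_sum, ← Finset.mul_sum, hPsum, hQsum]
    ring
  rcases eq_or_lt_of_le hβ1 with hβeq | hβlt
  · -- β = 1 : P = Q
    have hPQ : P = Q := by
      funext a
      have hz : ∑ b, (P b - 1 * Q b) = 0 := by
        rw [Finset.sum_sub_distrib, ← Finset.mul_sum, hPsum, hQsum]; ring
      have := (Finset.sum_eq_zero_iff_of_nonneg
        (fun b _ => by have hb := hwle b; rw [hβeq] at hb; linarith)).mp hz a (Finset.mem_univ a)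
      linarith
    subst hPQ
    have hVz : V = 0 := by
      rw [hVdef]; simp
    rw [hVz]
    simp [div_self (hQ _).ne']
  · -- β < 1
    set W := 1 - β with hWdef
    have hWpos : 0 < W := by rw [hWdef]; linarith
    have hA2 : ∑ a, (P a - β * Q a) * Real.log (P a / Q a) ≤ Real.log (1 + s) := by
      have hJ := jensen_step (fun a => P a - β * Q a) (fun a => P a / Q a)
        (fun a => sub_nonneg.2 (hwle a))
        (fun a ha => by
          have ha' : 0 < P a - β * Q a := ha
          have hQa := hQ a
          have hb : 0 ≤ β * Q a := mul_nonneg hβ0 (hQ a).le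
          have hPa : 0 < P a := by linarith
          positivity)
        (W := W) (T := W + s)
        (by rw [Finset.sum_sub_distrib, ← Finset.mul_sum, hPsum, hQsum, hWdef]; ring)
        hsumsq hWpos (by linarith)
      calc ∑ a, (P a - β * Q a) * Real.log (P a / Q a) ≤ W * Real.log ((W + s) / W) := hJ
        _ ≤ Real.log (1 + s) := wlog_le hWpos (by rw [hWdef]; linarith) hs0
    have hA1 : β * (V ^ 2 / 2) ≤ -(β * ∑ a, Q a * Real.log (P a / Q a)) := by
      rcases hβ0.eq_or_lt with h0 | h0
      · rw [← h0]; simp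
      · have hPpos : ∀ a, 0 < P a := fun a =>
          lt_of_lt_of_le (mul_pos h0 (hQ a)) (hwle a)
        have hlogswap : ∑ a, Q a * Real.log (Q a / P a)
            = -∑ a, Q a * Real.log (P a / Q a) := by
          rw [← Finset.sum_neg_distrib]
          apply Finset.sum_congr rfl
          intro a _
          rw [show Q a / P a = (P a / Q a)⁻¹ by rw [inv_div], Real.log_inv]
          ring
        have hp := pinsker_sum P Q hPpos hQ hPsum hQsum
        rw [← hVdef] at hp
        calc β * (V ^ 2 / 2) ≤ β * ∑ a, Q a * Real.log (Q a / P a) :=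
            mul_le_mul_of_nonneg_left hp h0.le
          _ = -(β * ∑ a, Q a * Real.log (P a / Q a)) := by rw [hlogswap]; ring
    have hdecomp : ∑ a, P a * Real.log (P a / Q a)
        = ∑ a, (P a - β * Q a) * Real.log (P a / Q a)
          + β * ∑ a, Q a * Real.log (P a / Q a) := by
      rw [Finset.mul_sum, ← Finset.sum_add_distrib]
      apply Finset.sum_congr rfl
      intro a _
      ring
    have hlogB : Real.log (1 + s) ≤ Real.log (1 + V ^ 2 / (2 * Qm)) := by
      apply Real.log_le_log (by positivity)
      linarith
    rw [hdecomp]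
    have hfinal : β / 2 * V ^ 2 = β * (V ^ 2 / 2) := by ring
    linarith [hA2, hA1, hlogB]
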